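/- Take a = 0, b = 1, and let 𝓕 be the set of linear functions consisting of the constant function 1 together with the functions t ↦ n·t for every n ∈ ℤ_{>0}. Then for every m ∈ ℤ_{>0} the linear function w_m(t) = (m − 1 + (m+2)·t)/m belongs to 𝒟(𝓕, [0,1]) and satisfies w_m(1) = (2m+1)/m. Consequently, the set 𝒟(𝓕, [0,1])|₁ := { w(1) : w ∈ 𝒟(𝓕, [0,1]) } contains the infinite strictly decreasing sequence ((2m+1)/m)_{m∈ℤ_{>0}} and therefore does not satisfy the descending chain condition. -/
import Mathlib


/-- A set `S ⊆ ℝ` satisfies the descending chain condition (DCC) if there is no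
infinite strictly decreasing sequence of elements of `S`. -/
def DCC (S : Set ℝ) : Prop :=
  ¬ ∃ f : ℕ → ℝ, (∀ i, f i ∈ S) ∧ StrictAnti f

/-- A real function is linear if it has the form `t ↦ p * t + q`. -/
def IsLinearFun (f : ℝ → ℝ) : Prop := ∃ p q : ℝ, ∀ t, f t = p * t + q

/-- `(𝓕₊, [a,c])`: `{0}` together with all finite positive-integer combinations of
elements of `𝓕` that are bounded above by `1` on `[a,c]`. -/
def FPlus (F : Set (ℝ → ℝ)) (a c : ℝ) : Set (ℝ → ℝ) :=
  {0} ∪ { v | (∃ k : ℕ, 0 < k ∧ ∃ n : Fin k → ℕ, ∃ f : Fin k → ℝ → ℝ,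
      (∀ i, 0 < n i) ∧ (∀ i, f i ∈ F) ∧ v = fun t => ∑ i, (n i : ℝ) * f i t) ∧
      ∀ t ∈ Set.Icc a c, v t ≤ 1 }

/-- `D(𝓕, [a,c])`: all functions `(m - 1 + v)/m` with `m ∈ ℤ_{>0}`, `v ∈ (𝓕₊,[a,c])`,
that are bounded above by `1` on `[a,c]`. -/
def DOp (F : Set (ℝ → ℝ)) (a c : ℝ) : Set (ℝ → ℝ) :=
  { w | ∃ m : ℕ, 0 < m ∧ ∃ v ∈ FPlus F a c,
      w = (fun t => ((m : ℝ) - 1 + v t) / m) ∧ ∀ t ∈ Set.Icc a c, w t ≤ 1 }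

/-- `𝒟(𝓕, [a,b]) = ⋃_{a < c ≤ b} D(𝓕, [a,c])`. -/
def calD (F : Set (ℝ → ℝ)) (a b : ℝ) : Set (ℝ → ℝ) :=
  ⋃ c ∈ Set.Ioc a b, DOp F a c

/-- The counterexample family: `𝓕 = {1} ∪ {t ↦ n·t : n ∈ ℤ_{>0}}` on `[0,1]`. -/
def Fex : Set (ℝ → ℝ) :=
  {fun _ => (1 : ℝ)} ∪ { f | ∃ n : ℕ, 0 < n ∧ f = fun t => (n : ℝ) * t }

lemma wm_mem (m : ℕ) (hm : 0 < m) :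
    (fun t => ((m : ℝ) - 1 + ((m : ℝ) + 2) * t) / m) ∈ calD Fex 0 1 := by
  have hm2 : (0 : ℝ) < (m : ℝ) + 2 := by positivity
  have hmr : (0 : ℝ) < (m : ℝ) := by exact_mod_cast hm
  have hv : ∀ t ∈ Set.Icc (0:ℝ) (1 / ((m : ℝ) + 2)), ((m : ℝ) + 2) * t ≤ 1 := by
    intro t ht
    have := ht.2
    calc ((m : ℝ) + 2) * t ≤ ((m : ℝ) + 2) * (1 / ((m : ℝ) + 2)) := by
          apply mul_le_mul_of_nonneg_left this (le_of_lt hm2)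
      _ = 1 := by field_simp
  simp only [calD, Set.mem_iUnion]
  refine ⟨1 / ((m : ℝ) + 2), ⟨by positivity, by
      rw [div_le_one hm2]; linarith⟩, ?_⟩
  refine ⟨m, hm, fun t => ((m : ℝ) + 2) * t, ?_, rfl, ?_⟩
  · refine Or.inr ⟨⟨1, one_pos, fun _ => 1, fun _ => (fun t => ((m : ℝ) + 2) * t),
      fun _ => one_pos, fun _ => Or.inr ⟨m + 2, by omega, by push_cast; rfl⟩, ?_⟩, hv⟩
    funext t; simp
  · intro t ht
    have := hv t ht
    rw [div_le_one hmr]; linarith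

lemma wm_val (m : ℕ) (hm : 0 < m) :
    ((m : ℝ) - 1 + ((m : ℝ) + 2) * 1) / m = (2 * (m : ℝ) + 1) / m := by
  ring_nf

lemma val_mem (m : ℕ) (hm : 0 < m) :
    (2 * (m : ℝ) + 1) / m ∈ { x : ℝ | ∃ w ∈ calD Fex 0 1, x = w 1 } := by
  exact ⟨_, wm_mem m hm, (wm_val m hm).symm⟩

lemma seq_anti : StrictAnti (fun m : ℕ => (2 * ((m : ℝ) + 1) + 1) / ((m : ℝ) + 1)) := by
  intro a b hab
  have ha : (0 : ℝ) < (a : ℝ) + 1 := by positivity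
  have hb : (0 : ℝ) < (b : ℝ) + 1 := by positivity
  have hcast : ((a : ℝ) + 1) < (b : ℝ) + 1 := by
    have : (a : ℝ) < b := by exact_mod_cast hab
    linarith
  have key : ∀ x : ℝ, 0 < x → (2 * x + 1) / x = 2 + 1 / x := by
    intro x hx; field_simp
  simp only [key _ ha, key _ hb]
  have : 1 / ((b : ℝ) + 1) < 1 / ((a : ℝ) + 1) := by
    apply one_div_lt_one_div_of_lt ha hcast
  linarith

theorem calD_not_DCC_at_one :
    (∀ m : ℕ, 0 < m →
      (fun t => ((m : ℝ) - 1 + ((m : ℝ) + 2) * t) / m) ∈ calD Fex 0 1 ∧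
      ((m : ℝ) - 1 + ((m : ℝ) + 2) * 1) / m = (2 * (m : ℝ) + 1) / m) ∧
    (∀ m : ℕ, 0 < m →
      (2 * (m : ℝ) + 1) / m ∈ { x : ℝ | ∃ w ∈ calD Fex 0 1, x = w 1 }) ∧
    StrictAnti (fun m : ℕ => (2 * ((m : ℝ) + 1) + 1) / ((m : ℝ) + 1)) ∧
    ¬ DCC { x : ℝ | ∃ w ∈ calD Fex 0 1, x = w 1 } := by
  refine ⟨fun m hm => ⟨wm_mem m hm, wm_val m hm⟩, val_mem, seq_anti, ?_⟩
  intro h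
  exact h ⟨fun i => (2 * ((i : ℝ) + 1) + 1) / ((i : ℝ) + 1), fun i => by
    have := val_mem (i + 1) (Nat.succ_pos i)
    push_cast at this ⊢
    exact this, seq_anti⟩
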